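/- Let N ≥ 1, fix a qubit index j ∈ Fin N, and let ρ be any complex matrix indexed by (Fin N → Fin 2). Define the reduced single-qubit matrix ρ^{(j)} as the 2×2 matrix with entries ρ^{(j)}(a,a') = Σ_{x : Fin N → Fin 2 with x(j) = a} ρ(x, update(x, j, a')), where update(x, j, a') changes the j-th coordinate of x to a'. Then the Born-weighted average of the local inverse snapshots at qubit j equals the reduced state: (1/3^N) · Σ_{P : Fin N → {X,Y,Z}} Σ_{b : Fin N → {0,1}} w_ρ(P,b) · (3·|e(P_j,b_j)⟩⟨e(P_j,b_j)| − I₂) = ρ^{(j)}. (Unbiasedness of the local shadow features used as inputs for direct fidelity estimation.) -/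

import Mathlib

open Matrix BigOperators

noncomputable section

/-- The eigenvectors `e(P,s)` of the Pauli matrices, with the index `0 ↦ X`, `1 ↦ Y`, `2 ↦ Z`. -/
def evec : Fin 3 → Fin 2 → Fin 2 → ℂ
  | 0, s => fun a => (1 / (Real.sqrt 2 : ℂ)) * (if a = 1 then (-1 : ℂ) ^ (s : ℕ) else 1)
  | 1, s => fun a => (1 / (Real.sqrt 2 : ℂ)) * (if a = 1 then (-1 : ℂ) ^ (s : ℕ) * Complex.I else 1)
  | 2, s => fun a => if a = s then 1 else 0

/-- The outer product `|v⟩⟨v|`, with entries `v a * conj (v b)`. -/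
def outer {n : Type*} (v : n → ℂ) : Matrix n n ℂ :=
  Matrix.of fun a b => v a * (starRingEnd ℂ) (v b)

/-- The product basis vector `e(P,b)` with entries `∏_j e(P_j,b_j)(x_j)`. -/
def pvec {N : ℕ} (P : Fin N → Fin 3) (b : Fin N → Fin 2) : (Fin N → Fin 2) → ℂ :=
  fun x => ∏ j, evec (P j) (b j) (x j)

/-- The Born-rule outcome weight `w_ρ(P,b) = ⟨e(P,b)|ρ|e(P,b)⟩`. -/
def wgt {N : ℕ} (ρ : Matrix (Fin N → Fin 2) (Fin N → Fin 2) ℂ)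
    (P : Fin N → Fin 3) (b : Fin N → Fin 2) : ℂ :=
  ∑ x, ∑ y, (starRingEnd ℂ) (pvec P b x) * ρ x y * pvec P b y

/-- The reduced single-qubit matrix of `ρ` at qubit `j` (the partial trace over the other
qubits): `ρ^{(j)}(a,a') = Σ_{x : x(j) = a} ρ(x, update(x,j,a'))`. -/
def reduced {N : ℕ} (ρ : Matrix (Fin N → Fin 2) (Fin N → Fin 2) ℂ) (j : Fin N) :
    Matrix (Fin 2) (Fin 2) ℂ :=
  Matrix.of fun a a' =>
    ∑ x ∈ Finset.univ.filter (fun x : Fin N → Fin 2 => x j = a),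
      ρ x (Function.update x j a')


lemma sqrt2_sq : ((Real.sqrt 2 : ℝ) : ℂ) * ((Real.sqrt 2 : ℝ) : ℂ) = 2 := by
  norm_cast
  rw [Real.mul_self_sqrt] <;> norm_num

lemma sumA (x y : Fin 2) :
    ∑ p : Fin 3, ∑ s : Fin 2, (starRingEnd ℂ) (evec p s x) * evec p s y
      = 3 * (if x = y then 1 else 0) := by
  have h := sqrt2_sq
  fin_cases x <;> fin_cases y <;>
    simp [evec, Fin.sum_univ_three, Fin.sum_univ_two, Complex.conj_ofReal, Complex.ext_iff] <;>
    field_simp <;> norm_num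

set_option maxHeartbeats 2000000 in
lemma sumB (x y a a' : Fin 2) :
    ∑ p : Fin 3, ∑ s : Fin 2, (starRingEnd ℂ) (evec p s x) * evec p s y *
        (((3 : ℂ) • outer (evec p s) - 1) a a')
      = 3 * ((if x = a then 1 else 0) * (if y = a' then 1 else 0)) := by
  have h := sqrt2_sq
  simp only [Matrix.sub_apply, Matrix.smul_apply, Matrix.one_apply, outer, Matrix.of_apply,
    smul_eq_mul, Fin.sum_univ_three, Fin.sum_univ_two]
  fin_cases x <;> fin_cases y <;> fin_cases a <;> fin_cases a' <;>
    simp [evec, Complex.conj_ofReal, Complex.ext_iff] <;>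
    field_simp <;> ring_nf <;> norm_num <;>
    rw [show Real.sqrt 2 ^ 4 = (Real.sqrt 2 ^ 2) ^ 2 by ring,
      Real.sq_sqrt (by norm_num : (0:ℝ) ≤ 2)] <;> norm_num

lemma key {N : ℕ} (j : Fin N) (x y : Fin N → Fin 2) (a a' : Fin 2) :
    ∑ P : Fin N → Fin 3, ∑ b : Fin N → Fin 2,
      (starRingEnd ℂ) (pvec P b x) * pvec P b y *
        (((3 : ℂ) • outer (evec (P j) (b j)) - 1) a a')
    = 3 ^ N * (if x j = a ∧ y = Function.update x j a' then 1 else 0) := by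
  set H : Fin N → (Fin 3 × Fin 2) → ℂ := fun k q =>
    (starRingEnd ℂ) (evec q.1 q.2 (x k)) * evec q.1 q.2 (y k) *
      (if k = j then ((3 : ℂ) • outer (evec q.1 q.2) - 1) a a' else 1) with hH
  have hsummand : ∀ (P : Fin N → Fin 3) (b : Fin N → Fin 2),
      (starRingEnd ℂ) (pvec P b x) * pvec P b y *
        (((3 : ℂ) • outer (evec (P j) (b j)) - 1) a a')
      = ∏ k, H k (P k, b k) := by
    intro P b
    simp only [hH]
    rw [Finset.prod_mul_distrib, Finset.prod_mul_distrib,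
      Fintype.prod_ite_eq' j (fun k => ((3 : ℂ) • outer (evec (P k) (b k)) - 1) a a')]
    simp only [pvec, map_prod]
  simp only [hsummand]
  have hcomb : (∑ P : Fin N → Fin 3, ∑ b : Fin N → Fin 2, ∏ k, H k (P k, b k))
      = ∏ k, ∑ p : Fin 3, ∑ s : Fin 2, H k (p, s) := by
    calc (∑ P : Fin N → Fin 3, ∑ b : Fin N → Fin 2, ∏ k, H k (P k, b k))
        = ∑ P : Fin N → Fin 3, ∏ k, ∑ s : Fin 2, H k (P k, s) :=
          Finset.sum_congr rfl fun P _ => (Fintype.prod_sum fun k s => H k (P k, s)).symm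
      _ = ∏ k, ∑ p : Fin 3, ∑ s : Fin 2, H k (p, s) :=
          (Fintype.prod_sum fun k p => ∑ s : Fin 2, H k (p, s)).symm
  rw [hcomb]
  have hS : ∀ k, (∑ p : Fin 3, ∑ s : Fin 2, H k (p, s))
      = 3 * (if k = j then (if x j = a then 1 else 0) * (if y j = a' then 1 else 0)
             else (if x k = y k then 1 else 0)) := by
    intro k
    by_cases hk : k = j
    · simp only [hH, hk, eq_self_iff_true, ite_true]
      exact sumB (x j) (y j) a a'
    · simp only [hH, if_neg hk, mul_one]
      rw [sumA]
  simp only [hS]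
  rw [Finset.prod_mul_distrib, Finset.prod_const, Finset.card_univ, Fintype.card_fin]
  congr 1
  by_cases hc : x j = a ∧ y = Function.update x j a'
  · obtain ⟨h1, h2⟩ := hc
    have hr : (if x j = a ∧ y = Function.update x j a' then (1 : ℂ) else 0) = 1 :=
      if_pos ⟨h1, h2⟩
    rw [hr]
    apply Finset.prod_eq_one
    intro k _
    by_cases hk : k = j
    · subst hk
      simp [h1, h2, Function.update_self]
    · simp [hk, h2, Function.update_of_ne hk]
  · rw [if_neg hc]
    by_cases h1 : x j = a
    · have h2 : y ≠ Function.update x j a' := fun h => hc ⟨h1, h⟩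
      obtain ⟨k, hk2⟩ := Function.ne_iff.mp h2
      apply Finset.prod_eq_zero (Finset.mem_univ k)
      by_cases hk : k = j
      · subst hk
        rw [Function.update_self] at hk2
        simp [hk2]
      · rw [Function.update_of_ne hk] at hk2
        rw [if_neg hk, if_neg (Ne.symm hk2)]
    · apply Finset.prod_eq_zero (Finset.mem_univ j)
      simp [h1]

lemma sum_swap4 {α β γ δ M : Type*} [Fintype α] [Fintype β] [Fintype γ] [Fintype δ]
    [AddCommMonoid M] (f : α → β → γ → δ → M) :
    ∑ p : α, ∑ b : β, ∑ x : γ, ∑ y : δ, f p b x y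
      = ∑ x : γ, ∑ y : δ, ∑ p : α, ∑ b : β, f p b x y := by
  trans ∑ p : α, ∑ x : γ, ∑ b : β, ∑ y : δ, f p b x y
  · exact Finset.sum_congr rfl fun p _ => Finset.sum_comm
  trans ∑ x : γ, ∑ p : α, ∑ b : β, ∑ y : δ, f p b x y
  · exact Finset.sum_comm
  trans ∑ x : γ, ∑ p : α, ∑ y : δ, ∑ b : β, f p b x y
  · exact Finset.sum_congr rfl fun x _ => Finset.sum_congr rfl fun p _ => Finset.sum_comm
  exact Finset.sum_congr rfl fun x _ => Finset.sum_comm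

/-- Unbiasedness of the local shadow features used as inputs for direct fidelity estimation:
the Born-weighted average of the local inverse snapshots at qubit `j` equals the reduced state,
`(1/3^N)·Σ_P Σ_b w_ρ(P,b)·(3·|e(P_j,b_j)⟩⟨e(P_j,b_j)| − I₂) = ρ^{(j)}`. -/
theorem local_shadow_unbiased {N : ℕ} (hN : 1 ≤ N) (j : Fin N)
    (ρ : Matrix (Fin N → Fin 2) (Fin N → Fin 2) ℂ) :
    (1 / 3 ^ N : ℂ) • ∑ P : Fin N → Fin 3, ∑ b : Fin N → Fin 2,
      wgt ρ P b • ((3 : ℂ) • outer (evec (P j) (b j)) - 1) = reduced ρ j := by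
  ext a a'
  simp only [Matrix.smul_apply, Matrix.sum_apply, smul_eq_mul, reduced, Matrix.of_apply]
  have step1 : ∀ (P : Fin N → Fin 3) (b : Fin N → Fin 2),
      wgt ρ P b * (((3 : ℂ) • outer (evec (P j) (b j)) - 1) a a')
      = ∑ x, ∑ y, (starRingEnd ℂ) (pvec P b x) * ρ x y * pvec P b y *
          (((3 : ℂ) • outer (evec (P j) (b j)) - 1) a a') := by
    intro P b
    rw [wgt, Finset.sum_mul]
    exact Finset.sum_congr rfl fun x _ => Finset.sum_mul _ _ _
  simp only [step1]
  rw [sum_swap4]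
  have step2 : ∀ x y : Fin N → Fin 2,
      (∑ P : Fin N → Fin 3, ∑ b : Fin N → Fin 2,
        (starRingEnd ℂ) (pvec P b x) * ρ x y * pvec P b y *
          (((3 : ℂ) • outer (evec (P j) (b j)) - 1) a a'))
      = ρ x y * ((3 : ℂ) ^ N *
          (if x j = a ∧ y = Function.update x j a' then 1 else 0)) := by
    intro x y
    rw [← key j x y a a', Finset.mul_sum]
    refine Finset.sum_congr rfl fun P _ => ?_
    rw [Finset.mul_sum]
    exact Finset.sum_congr rfl fun b _ => by ring
  simp only [step2]
  have step3 : ∀ x : Fin N → Fin 2,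
      (∑ y, ρ x y * ((3 : ℂ) ^ N *
        (if x j = a ∧ y = Function.update x j a' then 1 else 0)))
      = (3 : ℂ) ^ N * (if x j = a then ρ x (Function.update x j a') else 0) := by
    intro x
    by_cases h1 : x j = a
    · simp only [h1, true_and, if_true, mul_ite, mul_one, mul_zero, ite_mul, zero_mul]
      rw [Finset.sum_ite_eq' Finset.univ (Function.update x j a')
        (fun y => ρ x y * (3 : ℂ) ^ N), if_pos (Finset.mem_univ _)]
      ring
    · simp [h1]
  simp only [step3]
  rw [← Finset.mul_sum, ← mul_assoc, one_div, inv_mul_cancel₀ (pow_ne_zero _ (by norm_num)),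
    one_mul, Finset.sum_filter]
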